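/- Let u₁ ∈ C³([0,1], ℂ) with u₁′(0) = 0 and u₂ ∈ C²([0,1], ℂ) with u₂′(0) = 0, and define on (0,1] the functions v₁(ρ) := −ρ u₁′(ρ) − u₁(ρ) + u₂(ρ) and v₂(ρ) := u₁″(ρ) + (5/ρ) u₁′(ρ) − ρ u₂′(ρ) − 2 u₂(ρ). Then Re [ 2 ∫₀¹ v₁″(ρ) conj(u₁″(ρ)) ρ⁵ dρ + 10 ∫₀¹ v₁′(ρ) conj(u₁′(ρ)) ρ³ dρ + 2 ∫₀¹ v₂′(ρ) conj(u₂′(ρ)) ρ⁵ dρ + v₁(1) conj(u₁(1)) + v₂(1) conj(u₂(1)) ] ≤ 0. -/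

import Mathlib

noncomputable section

open MeasureTheory

private lemma re_eq_of_add_conj {z w : ℂ} (h : z + (starRingEnd ℂ) z = w + (starRingEnd ℂ) w) :
    z.re = w.re := by
  have := congrArg Complex.re h
  simp only [Complex.add_re, Complex.conj_re] at this
  linarith

private lemma Lre (r : ℝ) (a b c d e : ℂ) :
    (2 * ((-(r:ℂ) * c - 3 * b + e) * (starRingEnd ℂ) b * (r:ℂ)^5)
      + 10 * ((-(r:ℂ) * b - 2 * a + d) * (starRingEnd ℂ) a * (r:ℂ)^3)
      + 2 * ((c * (r:ℂ)^5 + 5 * b * (r:ℂ)^4 - 5 * a * (r:ℂ)^3 - e * (r:ℂ)^6 - 3 * d * (r:ℂ)^5)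
          * (starRingEnd ℂ) d)).re
    = (-(6:ℂ) * (r:ℂ)^5 * (b * (starRingEnd ℂ) b)
        - (r:ℂ)^6 * (c * (starRingEnd ℂ) b + b * (starRingEnd ℂ) c)
        - 20 * (r:ℂ)^3 * (a * (starRingEnd ℂ) a)
        - 5 * (r:ℂ)^4 * (b * (starRingEnd ℂ) a + a * (starRingEnd ℂ) b)
        - 6 * (r:ℂ)^5 * (d * (starRingEnd ℂ) d)
        - (r:ℂ)^6 * (e * (starRingEnd ℂ) d + d * (starRingEnd ℂ) e)
        + 10 * (r:ℂ)^4 * (b * (starRingEnd ℂ) d)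
        + 2 * (r:ℂ)^5 * (c * (starRingEnd ℂ) d + b * (starRingEnd ℂ) e)).re := by
  apply re_eq_of_add_conj
  simp only [map_add, map_sub, map_mul, map_neg, map_ofNat, Complex.conj_conj,
    Complex.conj_ofReal, map_pow]
  ring

private lemma Lineq (a b c p q : ℂ) :
    (-(b * (starRingEnd ℂ) b) - 5 * (a * (starRingEnd ℂ) a) - (c * (starRingEnd ℂ) c)
        + 2 * (b * (starRingEnd ℂ) c)).re
      + ((-(1:ℂ) * a - p + q) * (starRingEnd ℂ) p).re
      + ((b + 5 * a - c - 2 * q) * (starRingEnd ℂ) q).re ≤ 0 := by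
  simp only [Complex.add_re, Complex.sub_re, Complex.neg_re, Complex.mul_re, Complex.mul_im,
    Complex.conj_re, Complex.conj_im, Complex.re_ofNat, Complex.im_ofNat, Complex.one_re,
    Complex.one_im, Complex.neg_im, Complex.sub_im, Complex.add_im]
  nlinarith [sq_nonneg (b.re - c.re - q.re/2), sq_nonneg (a.re + p.re/10 - q.re/2),
    sq_nonneg (p.re - 5/19*q.re), sq_nonneg q.re,
    sq_nonneg (b.im - c.im - q.im/2), sq_nonneg (a.im + p.im/10 - q.im/2),
    sq_nonneg (p.im - 5/19*q.im), sq_nonneg q.im]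

private lemma hasDerivAt_ofReal (x : ℝ) : HasDerivAt (fun ρ : ℝ => (ρ:ℂ)) 1 x := by
  simpa using (hasDerivAt_id x).ofReal_comp

private lemma hasDerivAt_ofReal_pow (x : ℝ) (n : ℕ) :
    HasDerivAt (fun ρ : ℝ => (ρ:ℂ)^n) ((n:ℂ) * (x:ℂ)^(n-1)) x := by
  have h0 := hasDerivAt_pow n x
  have h1 := Complex.ofRealCLM.hasFDerivAt.comp_hasDerivAt x h0
  have h2 : (fun ρ : ℝ => (ρ:ℂ)^n) = (Complex.ofRealCLM ∘ fun ρ : ℝ => ρ^n) := by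
    funext y; simp [Function.comp]
  rw [h2]
  simpa using h1

section main
variable (u₁ u₂ : ℝ → ℂ)

private lemma L1 (hd1 : Differentiable ℝ u₁) (hd2 : Differentiable ℝ (deriv u₁))
    (he1 : Differentiable ℝ u₂) :
    deriv (fun ρ : ℝ => -(ρ:ℂ) * deriv u₁ ρ - u₁ ρ + u₂ ρ)
      = fun ρ : ℝ => -(ρ:ℂ) * deriv (deriv u₁) ρ - 2 * deriv u₁ ρ + deriv u₂ ρ := by
  funext x
  have : HasDerivAt (fun ρ : ℝ => -(ρ:ℂ) * deriv u₁ ρ - u₁ ρ + u₂ ρ)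
      (-(x:ℂ) * deriv (deriv u₁) x - 2 * deriv u₁ x + deriv u₂ x) x := by
    have := (((hasDerivAt_ofReal x).neg.mul (hd2 x).hasDerivAt).sub (hd1 x).hasDerivAt).add
      (he1 x).hasDerivAt
    convert this using 1
    any_goals rfl
    simp only [Pi.neg_apply]
    ring
  exact this.deriv

private lemma L2 (hd2 : Differentiable ℝ (deriv u₁)) (hd3 : Differentiable ℝ (deriv (deriv u₁)))
    (he2 : Differentiable ℝ (deriv u₂)) :
    deriv (fun ρ : ℝ => -(ρ:ℂ) * deriv (deriv u₁) ρ - 2 * deriv u₁ ρ + deriv u₂ ρ)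
      = fun ρ : ℝ => -(ρ:ℂ) * deriv (deriv (deriv u₁)) ρ - 3 * deriv (deriv u₁) ρ
          + deriv (deriv u₂) ρ := by
  funext x
  have : HasDerivAt (fun ρ : ℝ => -(ρ:ℂ) * deriv (deriv u₁) ρ - 2 * deriv u₁ ρ + deriv u₂ ρ)
      (-(x:ℂ) * deriv (deriv (deriv u₁)) x - 3 * deriv (deriv u₁) x + deriv (deriv u₂) x) x := by
    have := (((hasDerivAt_ofReal x).neg.mul (hd3 x).hasDerivAt).sub
      ((hd2 x).hasDerivAt.const_mul (2:ℂ))).add (he2 x).hasDerivAt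
    convert this using 1
    any_goals rfl
    simp only [Pi.neg_apply]
    ring
  exact this.deriv

private lemma L3 (hd2 : Differentiable ℝ (deriv u₁)) (hd3 : Differentiable ℝ (deriv (deriv u₁)))
    (he1 : Differentiable ℝ u₂) (he2 : Differentiable ℝ (deriv u₂))
    {x : ℝ} (hx : x ∈ Set.Ioo (0:ℝ) 1) :
    deriv (fun ρ : ℝ =>
        deriv (deriv u₁) ρ + (5 / (ρ:ℂ)) * deriv u₁ ρ - (ρ:ℂ) * deriv u₂ ρ - 2 * u₂ ρ) x
      * (starRingEnd ℂ) (deriv u₂ x) * (x:ℂ) ^ 5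
    = (deriv (deriv (deriv u₁)) x * (x:ℂ)^5 + 5 * deriv (deriv u₁) x * (x:ℂ)^4
        - 5 * deriv u₁ x * (x:ℂ)^3 - deriv (deriv u₂) x * (x:ℂ)^6 - 3 * deriv u₂ x * (x:ℂ)^5)
      * (starRingEnd ℂ) (deriv u₂ x) := by
  have hx0 : (x:ℂ) ≠ 0 := by exact_mod_cast ne_of_gt hx.1
  have hw : HasDerivAt (fun ρ : ℝ =>
      deriv (deriv u₁) ρ + (5 / (ρ:ℂ)) * deriv u₁ ρ - (ρ:ℂ) * deriv u₂ ρ - 2 * u₂ ρ)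
      (deriv (deriv (deriv u₁)) x
        + (-5 / (x:ℂ)^2 * deriv u₁ x + 5 / (x:ℂ) * deriv (deriv u₁) x)
        - (deriv u₂ x + (x:ℂ) * deriv (deriv u₂) x) - 2 * deriv u₂ x) x := by
    have hinv : HasDerivAt (fun ρ : ℝ => 5 / (ρ:ℂ)) (-5 / (x:ℂ)^2) x := by
      have h5 := (hasDerivAt_const x (5:ℂ)).div (hasDerivAt_ofReal x) hx0
      convert h5 using 1
      any_goals rfl
      ring
    have := (((hd3 x).hasDerivAt.add (hinv.mul (hd2 x).hasDerivAt)).sub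
      ((hasDerivAt_ofReal x).mul (he2 x).hasDerivAt)).sub ((he1 x).hasDerivAt.const_mul (2:ℂ))
    convert this using 1
    any_goals rfl
    ring
  rw [hw.deriv]
  field_simp
  ring

private lemma GG_deriv (hd2 : Differentiable ℝ (deriv u₁))
    (hd3 : Differentiable ℝ (deriv (deriv u₁))) (he2 : Differentiable ℝ (deriv u₂)) (x : ℝ) :
    HasDerivAt (fun y : ℝ => -(y:ℂ)^6 * (deriv (deriv u₁) y * (starRingEnd ℂ) (deriv (deriv u₁) y))
        - 5 * (y:ℂ)^4 * (deriv u₁ y * (starRingEnd ℂ) (deriv u₁ y))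
        - (y:ℂ)^6 * (deriv u₂ y * (starRingEnd ℂ) (deriv u₂ y))
        + 2 * (y:ℂ)^5 * (deriv (deriv u₁) y * (starRingEnd ℂ) (deriv u₂ y)))
      (-(6:ℂ) * (x:ℂ)^5 * (deriv (deriv u₁) x * (starRingEnd ℂ) (deriv (deriv u₁) x))
        - (x:ℂ)^6 * (deriv (deriv (deriv u₁)) x * (starRingEnd ℂ) (deriv (deriv u₁) x)
            + deriv (deriv u₁) x * (starRingEnd ℂ) (deriv (deriv (deriv u₁)) x))
        - 20 * (x:ℂ)^3 * (deriv u₁ x * (starRingEnd ℂ) (deriv u₁ x))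
        - 5 * (x:ℂ)^4 * (deriv (deriv u₁) x * (starRingEnd ℂ) (deriv u₁ x)
            + deriv u₁ x * (starRingEnd ℂ) (deriv (deriv u₁) x))
        - 6 * (x:ℂ)^5 * (deriv u₂ x * (starRingEnd ℂ) (deriv u₂ x))
        - (x:ℂ)^6 * (deriv (deriv u₂) x * (starRingEnd ℂ) (deriv u₂ x)
            + deriv u₂ x * (starRingEnd ℂ) (deriv (deriv u₂) x))
        + 10 * (x:ℂ)^4 * (deriv (deriv u₁) x * (starRingEnd ℂ) (deriv u₂ x))
        + 2 * (x:ℂ)^5 * (deriv (deriv (deriv u₁)) x * (starRingEnd ℂ) (deriv u₂ x)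
            + deriv (deriv u₁) x * (starRingEnd ℂ) (deriv (deriv u₂) x))) x := by
  have hBB : HasDerivAt (fun y => deriv (deriv u₁) y * (starRingEnd ℂ) (deriv (deriv u₁) y))
      (deriv (deriv (deriv u₁)) x * (starRingEnd ℂ) (deriv (deriv u₁) x)
        + deriv (deriv u₁) x * (starRingEnd ℂ) (deriv (deriv (deriv u₁)) x)) x := by
    simp only [starRingEnd_apply]
    exact (hd3 x).hasDerivAt.mul (hd3 x).hasDerivAt.star
  have hAA : HasDerivAt (fun y => deriv u₁ y * (starRingEnd ℂ) (deriv u₁ y))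
      (deriv (deriv u₁) x * (starRingEnd ℂ) (deriv u₁ x)
        + deriv u₁ x * (starRingEnd ℂ) (deriv (deriv u₁) x)) x := by
    simp only [starRingEnd_apply]
    exact (hd2 x).hasDerivAt.mul (hd2 x).hasDerivAt.star
  have hDD : HasDerivAt (fun y => deriv u₂ y * (starRingEnd ℂ) (deriv u₂ y))
      (deriv (deriv u₂) x * (starRingEnd ℂ) (deriv u₂ x)
        + deriv u₂ x * (starRingEnd ℂ) (deriv (deriv u₂) x)) x := by
    simp only [starRingEnd_apply]
    exact (he2 x).hasDerivAt.mul (he2 x).hasDerivAt.star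
  have hBD : HasDerivAt (fun y => deriv (deriv u₁) y * (starRingEnd ℂ) (deriv u₂ y))
      (deriv (deriv (deriv u₁)) x * (starRingEnd ℂ) (deriv u₂ x)
        + deriv (deriv u₁) x * (starRingEnd ℂ) (deriv (deriv u₂) x)) x := by
    simp only [starRingEnd_apply]
    exact (hd3 x).hasDerivAt.mul (he2 x).hasDerivAt.star
  have := ((((hasDerivAt_ofReal_pow x 6).neg.mul hBB).sub
    (((hasDerivAt_ofReal_pow x 4).const_mul (5:ℂ)).mul hAA)).sub
    ((hasDerivAt_ofReal_pow x 6).mul hDD)).add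
    (((hasDerivAt_ofReal_pow x 5).const_mul (2:ℂ)).mul hBD)
  convert this using 1
  any_goals rfl
  norm_num
  ring

end main

theorem free_operator_dissipative (u₁ u₂ : ℝ → ℂ)
    (hu₁ : ContDiff ℝ 3 u₁) (hu₂ : ContDiff ℝ 2 u₂)
    (hu₁0 : deriv u₁ 0 = 0) (hu₂0 : deriv u₂ 0 = 0) :
    (2 * (∫ ρ in Set.Ioo (0:ℝ) 1,
        deriv (deriv (fun ρ : ℝ => -(ρ:ℂ) * deriv u₁ ρ - u₁ ρ + u₂ ρ)) ρ
          * (starRingEnd ℂ) (deriv (deriv u₁) ρ) * (ρ:ℂ) ^ 5)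
      + 10 * (∫ ρ in Set.Ioo (0:ℝ) 1,
          deriv (fun ρ : ℝ => -(ρ:ℂ) * deriv u₁ ρ - u₁ ρ + u₂ ρ) ρ
            * (starRingEnd ℂ) (deriv u₁ ρ) * (ρ:ℂ) ^ 3)
      + 2 * (∫ ρ in Set.Ioo (0:ℝ) 1,
          deriv (fun ρ : ℝ =>
              deriv (deriv u₁) ρ + (5 / (ρ:ℂ)) * deriv u₁ ρ - (ρ:ℂ) * deriv u₂ ρ - 2 * u₂ ρ) ρ
            * (starRingEnd ℂ) (deriv u₂ ρ) * (ρ:ℂ) ^ 5)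
      + (-(1:ℂ) * deriv u₁ 1 - u₁ 1 + u₂ 1) * (starRingEnd ℂ) (u₁ 1)
      + (deriv (deriv u₁) 1 + 5 * deriv u₁ 1 - deriv u₂ 1 - 2 * u₂ 1)
          * (starRingEnd ℂ) (u₂ 1)).re ≤ 0 := by
  -- regularity facts
  have h3 : (3 : WithTop ℕ∞) = 2 + 1 := by norm_num
  have h2 : (2 : WithTop ℕ∞) = 1 + 1 := by norm_num
  obtain ⟨hd1, -, hc1⟩ := contDiff_succ_iff_deriv.mp (h3 ▸ hu₁)
  obtain ⟨hd2, -, hc2⟩ := contDiff_succ_iff_deriv.mp (h2 ▸ hc1)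
  obtain ⟨he1, -, hf1⟩ := contDiff_succ_iff_deriv.mp (h2 ▸ hu₂)
  have hd3 : Differentiable ℝ (deriv (deriv u₁)) := hc2.differentiable one_ne_zero
  have he2 : Differentiable ℝ (deriv u₂) := hf1.differentiable one_ne_zero
  have hcC : Continuous (deriv (deriv (deriv u₁))) := hc2.continuous_deriv le_rfl
  have hcE : Continuous (deriv (deriv u₂)) := hf1.continuous_deriv le_rfl
  have hcA : Continuous (deriv u₁) := hd2.continuous
  have hcB : Continuous (deriv (deriv u₁)) := hd3.continuous
  have hcD : Continuous (deriv u₂) := he2.continuous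
  -- continuity of the three integrands
  have hcg₁ : Continuous (fun x : ℝ =>
      (-(x:ℂ) * deriv (deriv (deriv u₁)) x - 3 * deriv (deriv u₁) x + deriv (deriv u₂) x)
        * (starRingEnd ℂ) (deriv (deriv u₁) x) * (x:ℂ) ^ 5) := by
    simp only [starRingEnd_apply]
    exact (((Complex.continuous_ofReal.neg.mul hcC).sub (continuous_const.mul hcB)).add
      hcE).mul (hcB.star) |>.mul (Complex.continuous_ofReal.pow 5)
  have hcg₂ : Continuous (fun x : ℝ =>
      (-(x:ℂ) * deriv (deriv u₁) x - 2 * deriv u₁ x + deriv u₂ x)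
        * (starRingEnd ℂ) (deriv u₁ x) * (x:ℂ) ^ 3) := by
    simp only [starRingEnd_apply]
    exact (((Complex.continuous_ofReal.neg.mul hcB).sub (continuous_const.mul hcA)).add
      hcD).mul (hcA.star) |>.mul (Complex.continuous_ofReal.pow 3)
  have hcg₃ : Continuous (fun x : ℝ =>
      (deriv (deriv (deriv u₁)) x * (x:ℂ)^5 + 5 * deriv (deriv u₁) x * (x:ℂ)^4
        - 5 * deriv u₁ x * (x:ℂ)^3 - deriv (deriv u₂) x * (x:ℂ)^6 - 3 * deriv u₂ x * (x:ℂ)^5)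
        * (starRingEnd ℂ) (deriv u₂ x)) := by
    simp only [starRingEnd_apply]
    exact (((((hcC.mul (Complex.continuous_ofReal.pow 5)).add
      ((continuous_const.mul hcB).mul (Complex.continuous_ofReal.pow 4))).sub
      ((continuous_const.mul hcA).mul (Complex.continuous_ofReal.pow 3))).sub
      (hcE.mul (Complex.continuous_ofReal.pow 6))).sub
      ((continuous_const.mul hcD).mul (Complex.continuous_ofReal.pow 5))).mul (hcD.star)
  have hint : ∀ {g : ℝ → ℂ}, Continuous g → IntegrableOn g (Set.Ioo (0:ℝ) 1) volume :=
    fun hg => (hg.integrableOn_Icc (a := 0) (b := 1)).mono_set Set.Ioo_subset_Icc_self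
  -- rewrite the first two integrands
  rw [L1 u₁ u₂ hd1 hd2 he1, L2 u₁ u₂ hd2 hd3 he2]
  -- rewrite the third integral
  rw [setIntegral_congr_fun measurableSet_Ioo
    (fun x hx => L3 u₁ u₂ hd2 hd3 he1 he2 hx)]
  -- combine the integrals
  set I₁ := ∫ ρ in Set.Ioo (0:ℝ) 1,
    (fun ρ : ℝ => -(ρ:ℂ) * deriv (deriv (deriv u₁)) ρ - 3 * deriv (deriv u₁) ρ
      + deriv (deriv u₂) ρ) ρ * (starRingEnd ℂ) (deriv (deriv u₁) ρ) * (ρ:ℂ) ^ 5 with hI₁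
  set I₂ := ∫ ρ in Set.Ioo (0:ℝ) 1,
    (fun ρ : ℝ => -(ρ:ℂ) * deriv (deriv u₁) ρ - 2 * deriv u₁ ρ + deriv u₂ ρ) ρ
      * (starRingEnd ℂ) (deriv u₁ ρ) * (ρ:ℂ) ^ 3 with hI₂
  set I₃ := ∫ x in Set.Ioo (0:ℝ) 1,
    (deriv (deriv (deriv u₁)) x * (x:ℂ)^5 + 5 * deriv (deriv u₁) x * (x:ℂ)^4
      - 5 * deriv u₁ x * (x:ℂ)^3 - deriv (deriv u₂) x * (x:ℂ)^6 - 3 * deriv u₂ x * (x:ℂ)^5)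
      * (starRingEnd ℂ) (deriv u₂ x) with hI₃
  have hIsum : 2 * I₁ + 10 * I₂ + 2 * I₃
      = ∫ x in Set.Ioo (0:ℝ) 1,
          (2 * ((-(x:ℂ) * deriv (deriv (deriv u₁)) x - 3 * deriv (deriv u₁) x
                + deriv (deriv u₂) x) * (starRingEnd ℂ) (deriv (deriv u₁) x) * (x:ℂ)^5)
            + 10 * ((-(x:ℂ) * deriv (deriv u₁) x - 2 * deriv u₁ x + deriv u₂ x)
                * (starRingEnd ℂ) (deriv u₁ x) * (x:ℂ)^3)
            + 2 * ((deriv (deriv (deriv u₁)) x * (x:ℂ)^5 + 5 * deriv (deriv u₁) x * (x:ℂ)^4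
                - 5 * deriv u₁ x * (x:ℂ)^3 - deriv (deriv u₂) x * (x:ℂ)^6
                - 3 * deriv u₂ x * (x:ℂ)^5) * (starRingEnd ℂ) (deriv u₂ x))) := by
    have hA1 : IntegrableOn (fun x : ℝ =>
        2 * ((-(x:ℂ) * deriv (deriv (deriv u₁)) x - 3 * deriv (deriv u₁) x
            + deriv (deriv u₂) x) * (starRingEnd ℂ) (deriv (deriv u₁) x) * (x:ℂ)^5)
          + 10 * ((-(x:ℂ) * deriv (deriv u₁) x - 2 * deriv u₁ x + deriv u₂ x)
            * (starRingEnd ℂ) (deriv u₁ x) * (x:ℂ)^3)) (Set.Ioo (0:ℝ) 1) volume := by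
      exact ((hint hcg₁).const_mul 2).add ((hint hcg₂).const_mul 10)
    have hA2 : IntegrableOn (fun x : ℝ =>
        2 * ((deriv (deriv (deriv u₁)) x * (x:ℂ)^5 + 5 * deriv (deriv u₁) x * (x:ℂ)^4
            - 5 * deriv u₁ x * (x:ℂ)^3 - deriv (deriv u₂) x * (x:ℂ)^6
            - 3 * deriv u₂ x * (x:ℂ)^5) * (starRingEnd ℂ) (deriv u₂ x)))
        (Set.Ioo (0:ℝ) 1) volume := (hint hcg₃).const_mul 2
    have hA3 : IntegrableOn (fun x : ℝ =>
        2 * ((-(x:ℂ) * deriv (deriv (deriv u₁)) x - 3 * deriv (deriv u₁) x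
            + deriv (deriv u₂) x) * (starRingEnd ℂ) (deriv (deriv u₁) x) * (x:ℂ)^5))
        (Set.Ioo (0:ℝ) 1) volume := (hint hcg₁).const_mul 2
    have hA4 : IntegrableOn (fun x : ℝ =>
        10 * ((-(x:ℂ) * deriv (deriv u₁) x - 2 * deriv u₁ x + deriv u₂ x)
            * (starRingEnd ℂ) (deriv u₁ x) * (x:ℂ)^3)) (Set.Ioo (0:ℝ) 1) volume :=
      (hint hcg₂).const_mul 10
    rw [integral_add hA1 hA2, integral_add hA3 hA4,
      integral_const_mul, integral_const_mul, integral_const_mul,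
      hI₁, hI₂, hI₃]
  rw [hIsum]
  have hcH : Continuous (fun x : ℝ =>
      2 * ((-(x:ℂ) * deriv (deriv (deriv u₁)) x - 3 * deriv (deriv u₁) x
            + deriv (deriv u₂) x) * (starRingEnd ℂ) (deriv (deriv u₁) x) * (x:ℂ)^5)
        + 10 * ((-(x:ℂ) * deriv (deriv u₁) x - 2 * deriv u₁ x + deriv u₂ x)
            * (starRingEnd ℂ) (deriv u₁ x) * (x:ℂ)^3)
        + 2 * ((deriv (deriv (deriv u₁)) x * (x:ℂ)^5 + 5 * deriv (deriv u₁) x * (x:ℂ)^4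
            - 5 * deriv u₁ x * (x:ℂ)^3 - deriv (deriv u₂) x * (x:ℂ)^6
            - 3 * deriv u₂ x * (x:ℂ)^5) * (starRingEnd ℂ) (deriv u₂ x))) := by
    exact ((continuous_const.mul hcg₁).add (continuous_const.mul hcg₂)).add
      (continuous_const.mul hcg₃)
  simp only [Complex.add_re]
  have hHre : (∫ x in Set.Ioo (0:ℝ) 1,
      (2 * ((-(x:ℂ) * deriv (deriv (deriv u₁)) x - 3 * deriv (deriv u₁) x
            + deriv (deriv u₂) x) * (starRingEnd ℂ) (deriv (deriv u₁) x) * (x:ℂ)^5)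
        + 10 * ((-(x:ℂ) * deriv (deriv u₁) x - 2 * deriv u₁ x + deriv u₂ x)
            * (starRingEnd ℂ) (deriv u₁ x) * (x:ℂ)^3)
        + 2 * ((deriv (deriv (deriv u₁)) x * (x:ℂ)^5 + 5 * deriv (deriv u₁) x * (x:ℂ)^4
            - 5 * deriv u₁ x * (x:ℂ)^3 - deriv (deriv u₂) x * (x:ℂ)^6
            - 3 * deriv u₂ x * (x:ℂ)^5) * (starRingEnd ℂ) (deriv u₂ x)))).re
      = ∫ x in Set.Ioo (0:ℝ) 1,
          (2 * ((-(x:ℂ) * deriv (deriv (deriv u₁)) x - 3 * deriv (deriv u₁) x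
              + deriv (deriv u₂) x) * (starRingEnd ℂ) (deriv (deriv u₁) x) * (x:ℂ)^5)
          + 10 * ((-(x:ℂ) * deriv (deriv u₁) x - 2 * deriv u₁ x + deriv u₂ x)
              * (starRingEnd ℂ) (deriv u₁ x) * (x:ℂ)^3)
          + 2 * ((deriv (deriv (deriv u₁)) x * (x:ℂ)^5 + 5 * deriv (deriv u₁) x * (x:ℂ)^4
              - 5 * deriv u₁ x * (x:ℂ)^3 - deriv (deriv u₂) x * (x:ℂ)^6
              - 3 * deriv u₂ x * (x:ℂ)^5) * (starRingEnd ℂ) (deriv u₂ x))).re := by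
    have := Complex.reCLM.integral_comp_comm (hint hcH)
    simpa using this.symm
  rw [hHre]
  -- FTC
  have hG : ∀ x : ℝ, HasDerivAt (fun y : ℝ =>
      (-(y:ℂ)^6 * (deriv (deriv u₁) y * (starRingEnd ℂ) (deriv (deriv u₁) y))
        - 5 * (y:ℂ)^4 * (deriv u₁ y * (starRingEnd ℂ) (deriv u₁ y))
        - (y:ℂ)^6 * (deriv u₂ y * (starRingEnd ℂ) (deriv u₂ y))
        + 2 * (y:ℂ)^5 * (deriv (deriv u₁) y * (starRingEnd ℂ) (deriv u₂ y))).re)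
      ((2 * ((-(x:ℂ) * deriv (deriv (deriv u₁)) x - 3 * deriv (deriv u₁) x
            + deriv (deriv u₂) x) * (starRingEnd ℂ) (deriv (deriv u₁) x) * (x:ℂ)^5)
        + 10 * ((-(x:ℂ) * deriv (deriv u₁) x - 2 * deriv u₁ x + deriv u₂ x)
            * (starRingEnd ℂ) (deriv u₁ x) * (x:ℂ)^3)
        + 2 * ((deriv (deriv (deriv u₁)) x * (x:ℂ)^5 + 5 * deriv (deriv u₁) x * (x:ℂ)^4
            - 5 * deriv u₁ x * (x:ℂ)^3 - deriv (deriv u₂) x * (x:ℂ)^6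
            - 3 * deriv u₂ x * (x:ℂ)^5) * (starRingEnd ℂ) (deriv u₂ x))).re) x := by
    intro x
    rw [Lre x (deriv u₁ x) (deriv (deriv u₁) x) (deriv (deriv (deriv u₁)) x)
      (deriv u₂ x) (deriv (deriv u₂) x)]
    have h := GG_deriv u₁ u₂ hd2 hd3 he2 x
    have h2 := Complex.reCLM.hasFDerivAt.comp_hasDerivAt x h
    exact h2
  have hii : IntervalIntegrable (fun x : ℝ =>
      (2 * ((-(x:ℂ) * deriv (deriv (deriv u₁)) x - 3 * deriv (deriv u₁) x
            + deriv (deriv u₂) x) * (starRingEnd ℂ) (deriv (deriv u₁) x) * (x:ℂ)^5)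
        + 10 * ((-(x:ℂ) * deriv (deriv u₁) x - 2 * deriv u₁ x + deriv u₂ x)
            * (starRingEnd ℂ) (deriv u₁ x) * (x:ℂ)^3)
        + 2 * ((deriv (deriv (deriv u₁)) x * (x:ℂ)^5 + 5 * deriv (deriv u₁) x * (x:ℂ)^4
            - 5 * deriv u₁ x * (x:ℂ)^3 - deriv (deriv u₂) x * (x:ℂ)^6
            - 3 * deriv u₂ x * (x:ℂ)^5) * (starRingEnd ℂ) (deriv u₂ x))).re) volume 0 1 :=
    (Complex.continuous_re.comp hcH).intervalIntegrable 0 1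
  have hftc := intervalIntegral.integral_eq_sub_of_hasDerivAt (fun x _ => hG x) hii
  rw [intervalIntegral.integral_of_le (by norm_num : (0:ℝ) ≤ 1),
    integral_Ioc_eq_integral_Ioo] at hftc
  rw [hftc]
  have h0 : (-((0:ℝ):ℂ)^6 * (deriv (deriv u₁) 0 * (starRingEnd ℂ) (deriv (deriv u₁) 0))
      - 5 * ((0:ℝ):ℂ)^4 * (deriv u₁ 0 * (starRingEnd ℂ) (deriv u₁ 0))
      - ((0:ℝ):ℂ)^6 * (deriv u₂ 0 * (starRingEnd ℂ) (deriv u₂ 0))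
      + 2 * ((0:ℝ):ℂ)^5 * (deriv (deriv u₁) 0 * (starRingEnd ℂ) (deriv u₂ 0))).re = 0 := by
    norm_num
  have h1' : (-((1:ℝ):ℂ)^6 * (deriv (deriv u₁) 1 * (starRingEnd ℂ) (deriv (deriv u₁) 1))
      - 5 * ((1:ℝ):ℂ)^4 * (deriv u₁ 1 * (starRingEnd ℂ) (deriv u₁ 1))
      - ((1:ℝ):ℂ)^6 * (deriv u₂ 1 * (starRingEnd ℂ) (deriv u₂ 1))
      + 2 * ((1:ℝ):ℂ)^5 * (deriv (deriv u₁) 1 * (starRingEnd ℂ) (deriv u₂ 1)))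
      = (-(deriv (deriv u₁) 1 * (starRingEnd ℂ) (deriv (deriv u₁) 1))
        - 5 * (deriv u₁ 1 * (starRingEnd ℂ) (deriv u₁ 1))
        - (deriv u₂ 1 * (starRingEnd ℂ) (deriv u₂ 1))
        + 2 * (deriv (deriv u₁) 1 * (starRingEnd ℂ) (deriv u₂ 1))) := by
    norm_num
  rw [h0, h1', sub_zero]
  exact Lineq (deriv u₁ 1) (deriv (deriv u₁) 1) (deriv u₂ 1) (u₁ 1) (u₂ 1)
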